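/- Let u be a classical solution of the heat equation on [0,T]×[−1,0] satisfying u(0,x) = 0 for all x ∈ [−1,0], u(t,−1) = 0 for all t ∈ [0,T], and the boundary relation u(t,0) = −∂_x u(t,0) for all t ∈ [0,T]. Then u is identically zero on [0,T]×[−1,0]. (This is the classical-solution form of the statement that the kernel of I + L₀ is trivial, where L₀ is the Neumann-to-Dirichlet operator of the heat equation with zero initial data.) -/

import Mathlib

open Set Real MeasureTheory intervalIntegral

/-- A classical solution of the heat equation `∂_t u = ∂_x² u` on `[0,T] × [−1,0]`:
`u` is continuous on the closed rectangle, the partial derivatives `ut = ∂_t u`,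
`ux = ∂_x u`, `uxx = ∂_x² u` exist and are continuous there, and `∂_t u = ∂_x² u`. -/
structure IsHeatSol (T : ℝ) (u ut ux uxx : ℝ → ℝ → ℝ) : Prop where
  contu : ContinuousOn (fun p : ℝ × ℝ => u p.1 p.2) (Icc 0 T ×ˢ Icc (-1) 0)
  hut : ∀ t ∈ Icc (0:ℝ) T, ∀ x ∈ Icc (-1:ℝ) 0, HasDerivAt (fun τ => u τ x) (ut t x) t
  hux : ∀ t ∈ Icc (0:ℝ) T, ∀ x ∈ Icc (-1:ℝ) 0, HasDerivAt (fun y => u t y) (ux t x) x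
  huxx : ∀ t ∈ Icc (0:ℝ) T, ∀ x ∈ Icc (-1:ℝ) 0, HasDerivAt (fun y => ux t y) (uxx t x) x
  contut : ContinuousOn (fun p : ℝ × ℝ => ut p.1 p.2) (Icc 0 T ×ˢ Icc (-1) 0)
  contux : ContinuousOn (fun p : ℝ × ℝ => ux p.1 p.2) (Icc 0 T ×ˢ Icc (-1) 0)
  contuxx : ContinuousOn (fun p : ℝ × ℝ => uxx p.1 p.2) (Icc 0 T ×ˢ Icc (-1) 0)
  heat : ∀ t ∈ Icc (0:ℝ) T, ∀ x ∈ Icc (-1:ℝ) 0, ut t x = uxx t x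

section Aux

variable {T : ℝ} {u ut ux uxx : ℝ → ℝ → ℝ}

/-- Continuity in `x` for fixed `s`. -/
lemma contSlice (hf : ContinuousOn (fun p : ℝ × ℝ => u p.1 p.2) (Icc 0 T ×ˢ Icc (-1) 0))
    {s : ℝ} (hs : s ∈ Icc (0:ℝ) T) :
    ContinuousOn (fun y => u s y) (Icc (-1) 0) := by
  have : ContinuousOn (fun y : ℝ => ((s, y) : ℝ × ℝ)) (Icc (-1) 0) :=
    (Continuous.prodMk_right s).continuousOn
  exact hf.comp this (fun y hy => ⟨hs, hy⟩)

/-- Continuity in `t` for fixed `x`. -/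
lemma contSliceT (hf : ContinuousOn (fun p : ℝ × ℝ => u p.1 p.2) (Icc 0 T ×ˢ Icc (-1) 0))
    {x : ℝ} (hx : x ∈ Icc (-1:ℝ) 0) :
    ContinuousOn (fun s => u s x) (Icc 0 T) := by
  have : ContinuousOn (fun s : ℝ => ((s, x) : ℝ × ℝ)) (Icc 0 T) :=
    (continuous_id.prodMk continuous_const).continuousOn
  exact hf.comp this (fun s hs => ⟨hs, hx⟩)

end Aux


/-- A classical solution of the heat equation on `[0,T] × [−1,0]`
with zero initial data, `u(t,−1) = 0`, and boundary relation `u(t,0) = −∂_x u(t,0)`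
vanishes identically. (Classical-solution form of `ker (I + L₀) = {0}` for the
Neumann-to-Dirichlet operator `L₀` with zero initial data.) -/
theorem kernel_I_plus_L0_trivial (T : ℝ) (hT : 0 ≤ T) (u ut ux uxx : ℝ → ℝ → ℝ)
    (hu : IsHeatSol T u ut ux uxx)
    (hinit : ∀ x ∈ Icc (-1:ℝ) 0, u 0 x = 0)
    (hbu : ∀ t ∈ Icc (0:ℝ) T, u t (-1) = 0)
    (hbd : ∀ t ∈ Icc (0:ℝ) T, u t 0 = -ux t 0) :
    ∀ t ∈ Icc (0:ℝ) T, ∀ x ∈ Icc (-1:ℝ) 0, u t x = 0 := by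
  intro t ht
  have h10 : (-1:ℝ) ≤ 0 := by norm_num
  have huIcc : uIcc (-1:ℝ) 0 = Icc (-1) 0 := uIcc_of_le h10
  have htt : Icc (0:ℝ) t ⊆ Icc 0 T := Icc_subset_Icc le_rfl ht.2
  -- the inner-integrand in time
  set F : ℝ → ℝ → ℝ := fun s x => 2 * (u s x * ut s x) with hF
  -- pointwise FTC in time
  have hFTC : ∀ x ∈ Icc (-1:ℝ) 0, u t x * u t x = ∫ s in (0:ℝ)..t, F s x := by
    intro x hx
    have hderiv : ∀ s ∈ uIcc (0:ℝ) t, HasDerivAt (fun τ => u τ x * u τ x)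
        (F s x) s := by
      intro s hs
      rw [uIcc_of_le ht.1] at hs
      have h : HasDerivAt (fun τ => u τ x * u τ x) (ut s x * u s x + u s x * ut s x) s :=
        (hu.hut s (htt hs) x hx).mul (hu.hut s (htt hs) x hx)
      convert h using 1; show 2 * (u s x * ut s x) = _; ring
    have hint : IntervalIntegrable (fun s => F s x) volume 0 t := by
      apply ContinuousOn.intervalIntegrable
      rw [uIcc_of_le ht.1]
      have h1 := (contSliceT hu.contu hx).mono htt
      have h2 := (contSliceT hu.contut hx).mono htt
      exact (continuousOn_const.mul (h1.mul h2))
    have := intervalIntegral.integral_eq_sub_of_hasDerivAt hderiv hint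
    rw [this, hinit x hx]; ring
  -- integration by parts in space
  have hg : ∀ s ∈ Icc (0:ℝ) t, (∫ x in (-1:ℝ)..0, F s x) ≤ 0 := by
    intro s hs
    have hsT : s ∈ Icc (0:ℝ) T := htt hs
    have hcu := contSlice hu.contu hsT
    have hcux := contSlice hu.contux hsT
    have hcuxx := contSlice hu.contuxx hsT
    have hparts : ∫ x in (-1:ℝ)..0, (ux s x * ux s x + u s x * uxx s x)
        = u s 0 * ux s 0 - u s (-1) * ux s (-1) := by
      apply intervalIntegral.integral_eq_sub_of_hasDerivAt
        (f := fun y => u s y * ux s y)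
      · intro y hy
        rw [huIcc] at hy
        exact (hu.hux s hsT y hy).mul (hu.huxx s hsT y hy)
      · apply ContinuousOn.intervalIntegrable
        rw [huIcc]
        exact (hcux.mul hcux).add (hcu.mul hcuxx)
    have hIA : IntervalIntegrable (fun x => ux s x * ux s x) volume (-1) 0 := by
      apply ContinuousOn.intervalIntegrable; rw [huIcc]; exact hcux.mul hcux
    have hIB : IntervalIntegrable (fun x => u s x * uxx s x) volume (-1) 0 := by
      apply ContinuousOn.intervalIntegrable; rw [huIcc]; exact hcu.mul hcuxx
    have hsum : (∫ x in (-1:ℝ)..0, ux s x * ux s x)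
        + (∫ x in (-1:ℝ)..0, u s x * uxx s x)
        = u s 0 * ux s 0 - u s (-1) * ux s (-1) := by
      rw [← intervalIntegral.integral_add hIA hIB]; exact hparts
    have hheat : (∫ x in (-1:ℝ)..0, F s x) = ∫ x in (-1:ℝ)..0, 2 * (u s x * uxx s x) := by
      apply intervalIntegral.integral_congr
      intro y hy
      rw [huIcc] at hy
      simp only [hF, hu.heat s hsT y hy]
    have hA : (0:ℝ) ≤ ∫ x in (-1:ℝ)..0, ux s x * ux s x :=
      intervalIntegral.integral_nonneg h10 (fun y _ => mul_self_nonneg _)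
    have h2B : (∫ x in (-1:ℝ)..0, 2 * (u s x * uxx s x))
        = 2 * ∫ x in (-1:ℝ)..0, u s x * uxx s x := by
      rw [intervalIntegral.integral_const_mul]
    rw [hheat, h2B]
    have hbd0 : u s 0 * ux s 0 = -(ux s 0 * ux s 0) := by rw [hbd s hsT]; ring
    have hbu0 : u s (-1) * ux s (-1) = 0 := by rw [hbu s hsT]; ring
    nlinarith [mul_self_nonneg (ux s 0)]
  -- Fubini swap
  have hcontF : ContinuousOn (fun p : ℝ × ℝ => F p.2 p.1) (Icc (-1) 0 ×ˢ Icc 0 t) := by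
    have hswapc : ContinuousOn (fun p : ℝ × ℝ => ((p.2, p.1) : ℝ × ℝ))
        (Icc (-1) 0 ×ˢ Icc 0 t) := (continuous_snd.prodMk continuous_fst).continuousOn
    have hmem : MapsTo (fun p : ℝ × ℝ => ((p.2, p.1) : ℝ × ℝ))
        (Icc (-1) 0 ×ˢ Icc 0 t) (Icc 0 T ×ˢ Icc (-1) 0) := by
      intro p hp; exact ⟨htt hp.2, hp.1⟩
    exact (continuousOn_const.mul ((hu.contu.comp hswapc hmem).mul
      (hu.contut.comp hswapc hmem)))
  have hIntF : Integrable (Function.uncurry fun x s => F s x)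
      ((volume.restrict (Ioc (-1:ℝ) 0)).prod (volume.restrict (Ioc (0:ℝ) t))) := by
    rw [Measure.prod_restrict]
    have : (volume : Measure (ℝ × ℝ)) = volume.prod volume := rfl
    rw [← this]
    have hio : IntegrableOn (Function.uncurry fun x s => F s x)
        (Icc (-1:ℝ) 0 ×ˢ Icc (0:ℝ) t) volume :=
      hcontF.integrableOn_compact (isCompact_Icc.prod isCompact_Icc)
    exact hio.mono_set (prod_mono Ioc_subset_Icc_self Ioc_subset_Icc_self)
  have hswap : (∫ x in (-1:ℝ)..0, ∫ s in (0:ℝ)..t, F s x)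
      = ∫ s in (0:ℝ)..t, ∫ x in (-1:ℝ)..0, F s x := by
    rw [intervalIntegral.integral_of_le h10, intervalIntegral.integral_of_le ht.1]
    have h1 : ∀ x, (∫ s in (0:ℝ)..t, F s x) = ∫ s in Ioc (0:ℝ) t, F s x := fun x =>
      intervalIntegral.integral_of_le ht.1
    have h2 : ∀ s, (∫ x in (-1:ℝ)..0, F s x) = ∫ x in Ioc (-1:ℝ) 0, F s x := fun s =>
      intervalIntegral.integral_of_le h10
    simp only [h1, h2]
    exact MeasureTheory.integral_integral_swap hIntF
  -- energy is zero
  have hE0 : (∫ x in (-1:ℝ)..0, u t x * u t x) = 0 := by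
    have hEnn : (0:ℝ) ≤ ∫ x in (-1:ℝ)..0, u t x * u t x :=
      intervalIntegral.integral_nonneg h10 (fun y _ => mul_self_nonneg _)
    have he1 : (∫ x in (-1:ℝ)..0, u t x * u t x)
        = ∫ x in (-1:ℝ)..0, ∫ s in (0:ℝ)..t, F s x := by
      apply intervalIntegral.integral_congr
      intro y hy; rw [huIcc] at hy; exact hFTC y hy
    have hEnp : (∫ x in (-1:ℝ)..0, u t x * u t x) ≤ 0 := by
      rw [he1, hswap]
      have : (0:ℝ) ≤ ∫ s in (0:ℝ)..t, -(∫ x in (-1:ℝ)..0, F s x) :=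
        intervalIntegral.integral_nonneg ht.1 (fun s hs => neg_nonneg.mpr (hg s hs))
      rw [intervalIntegral.integral_neg] at this
      linarith
    linarith
  -- conclude pointwise
  have hcut : ContinuousOn (fun y => u t y) (Icc (-1) 0) := contSlice hu.contu ht
  have hcut2 : ContinuousOn (fun y => u t y * u t y) (Icc (-1) 0) := hcut.mul hcut
  have hint2 : IntervalIntegrable (fun y => u t y * u t y) volume (-1) 0 := by
    apply ContinuousOn.intervalIntegrable; rwa [huIcc]
  have hae : (fun y => u t y * u t y) =ᵐ[volume.restrict (Ioc (-1:ℝ) 0)] 0 :=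
    (intervalIntegral.integral_eq_zero_iff_of_le_of_nonneg_ae h10
      (Filter.Eventually.of_forall fun y => mul_self_nonneg _) hint2).mp hE0
  have hae' : (fun y => u t y * u t y) =ᵐ[volume.restrict (Icc (-1:ℝ) 0)] 0 := by
    rwa [Measure.restrict_congr_set Ioc_ae_eq_Icc] at hae
  have heq : EqOn (fun y => u t y * u t y) 0 (Icc (-1:ℝ) 0) :=
    Measure.eqOn_Icc_of_ae_eq (μ := volume) (by norm_num : (-1:ℝ) ≠ 0) hae' hcut2 continuousOn_const
  intro x hx
  have := heq hx
  simpa [mul_self_eq_zero] using this
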